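/- Let α ∈ (0,1) and let ν(dz) = 1_{z ∈ ℝ_+^d, |z| ≤ 1} |z|^{−d−α} dz. Then ν is a Lévy measure on ℝ_+^d with ∫ (1 ∧ |z|) ν(dz) < ∞, and there exist constants c, C > 0 such that c |λ|^α ≤ ∫_{ℝ_+^d} (1 − cos(λ·z)) ν(dz) ≤ C |λ|^α for all λ ∈ ℝ^d with |λ| ≥ 1. -/

import Mathlib

open MeasureTheory Finset
open scoped ENNReal

section helpers
open Set Metric ENNReal
variable {d : ℕ}

private lemma lint_smul {f : (Fin d → ℝ) → ℝ≥0∞} (hf : Measurable f) {c : ℝ} (hc : 0 < c) :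
    ∫⁻ x : Fin d → ℝ, f (c • x) = ENNReal.ofReal ((c ^ d)⁻¹) * ∫⁻ x, f x := by
  have h := Measure.map_addHaar_smul (volume : Measure (Fin d → ℝ)) hc.ne'
  rw [← lintegral_map hf (measurable_const_smul c), h, lintegral_smul_measure]
  congr 2
  rw [Module.finrank_fin_fun, abs_of_pos (by positivity)]

private lemma finite_small (hd : 0 < d) (β : ℝ) (hβ : 0 < β + d) :
    ∫⁻ w : Fin d → ℝ,
      Set.indicator {w : Fin d → ℝ | ‖w‖ ≤ 1} (fun w => ENNReal.ofReal (‖w‖ ^ β)) w < ⊤ := by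
  have : Nonempty (Fin d) := ⟨⟨0, hd⟩⟩
  rw [lintegral_indicator (measurableSet_le measurable_norm measurable_const)]
  set S : ℕ → Set (Fin d → ℝ) := fun k =>
    closedBall 0 ((1/2 : ℝ) ^ k) \ ball 0 ((1/2 : ℝ) ^ (k+1)) with hS
  have cover : {w : Fin d → ℝ | ‖w‖ ≤ 1} ⊆ {0} ∪ ⋃ k : ℕ, S k := by
    intro w hw
    rcases eq_or_ne w 0 with rfl | hw0
    · exact Or.inl rfl
    have hwpos : 0 < ‖w‖ := norm_pos_iff.mpr hw0
    have hex : ∃ n : ℕ, (1/2 : ℝ) ^ (n+1) ≤ ‖w‖ := by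
      obtain ⟨n, hn⟩ := exists_pow_lt_of_lt_one hwpos (by norm_num : (1/2 : ℝ) < 1)
      exact ⟨n, le_of_lt (lt_of_le_of_lt (pow_le_pow_of_le_one (by norm_num)
        (by norm_num) (Nat.le_succ n)) hn)⟩
    refine Or.inr (Set.mem_iUnion.mpr ⟨Nat.find hex, ?_, ?_⟩)
    · simp only [mem_closedBall_zero_iff]
      rcases Nat.eq_zero_or_pos (Nat.find hex) with h0 | hpos
      · rw [h0, pow_zero]; exact hw
      · have := Nat.find_min hex (Nat.sub_lt hpos one_pos)
        push_neg at this
        rw [← Nat.succ_pred_eq_of_pos hpos]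
        exact le_of_lt this
    · simp only [mem_ball_zero_iff, not_lt]
      exact Nat.find_spec hex
  set M : ℝ := max 1 ((2:ℝ) ^ (-β)) with hM
  have hM0 : 0 ≤ M := le_trans zero_le_one (le_max_left _ _)
  set q : ℝ := (1/2 : ℝ) ^ (β + d) with hq
  have hq0 : 0 ≤ q := Real.rpow_nonneg (by norm_num) _
  have hq1 : q < 1 := Real.rpow_lt_one (by norm_num) (by norm_num) hβ
  set V : ℝ≥0∞ := volume (ball (0 : Fin d → ℝ) 1) with hV
  have key : ∀ k : ℕ, ∫⁻ w in S k, ENNReal.ofReal (‖w‖ ^ β)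
      ≤ ENNReal.ofReal (M * q ^ k) * V := by
    intro k
    have hrk : (0:ℝ) < (1/2 : ℝ) ^ k := by positivity
    have hub : ∀ w ∈ S k, ENNReal.ofReal (‖w‖ ^ β)
        ≤ ENNReal.ofReal (M * ((1/2 : ℝ) ^ k) ^ β) := by
      intro w hw
      apply ENNReal.ofReal_le_ofReal
      obtain ⟨hw1, hw2⟩ := hw
      rw [mem_closedBall_zero_iff] at hw1
      rw [mem_ball_zero_iff, not_lt] at hw2
      have hwpos : 0 < ‖w‖ := lt_of_lt_of_le (by positivity) hw2
      rcases le_or_gt 0 β with hb | hb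
      · calc ‖w‖ ^ β ≤ ((1/2 : ℝ) ^ k) ^ β := Real.rpow_le_rpow (norm_nonneg w) hw1 hb
          _ ≤ M * ((1/2 : ℝ) ^ k) ^ β := by
            nlinarith [Real.rpow_nonneg (le_of_lt hrk) β, le_max_left 1 ((2:ℝ) ^ (-β))]
      · have h1 : ‖w‖ ^ β ≤ ((1/2 : ℝ) ^ (k+1)) ^ β :=
          Real.rpow_le_rpow_of_nonpos (by positivity) hw2 hb.le
        have h2 : ((1/2 : ℝ) ^ (k+1)) ^ β = (2:ℝ) ^ (-β) * ((1/2 : ℝ) ^ k) ^ β := by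
          rw [pow_succ, Real.mul_rpow (by positivity) (by norm_num)]
          rw [show ((1:ℝ)/2) ^ β = (2:ℝ)⁻¹ ^ β by norm_num,
            Real.inv_rpow (by norm_num), ← Real.rpow_neg (by norm_num)]
          ring
        have h3 : (2:ℝ) ^ (-β) ≤ M := le_max_right _ _
        nlinarith [Real.rpow_nonneg (le_of_lt hrk) β]
    calc ∫⁻ w in S k, ENNReal.ofReal (‖w‖ ^ β)
        ≤ ∫⁻ _ in S k, ENNReal.ofReal (M * ((1/2 : ℝ) ^ k) ^ β) :=
          setLIntegral_mono' ((measurableSet_closedBall).diff measurableSet_ball) hub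
      _ = ENNReal.ofReal (M * ((1/2 : ℝ) ^ k) ^ β) * volume (S k) := setLIntegral_const _ _
      _ ≤ ENNReal.ofReal (M * ((1/2 : ℝ) ^ k) ^ β) *
            volume (closedBall (0 : Fin d → ℝ) ((1/2 : ℝ) ^ k)) :=
          mul_le_mul_right (measure_mono diff_subset) _
      _ = ENNReal.ofReal (M * ((1/2 : ℝ) ^ k) ^ β) *
            (ENNReal.ofReal (((1/2 : ℝ) ^ k) ^ d) * V) := by
          rw [Measure.addHaar_closedBall _ _ (le_of_lt hrk), Module.finrank_fin_fun, hV]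
      _ = ENNReal.ofReal (M * q ^ k) * V := by
          rw [← mul_assoc, ← ENNReal.ofReal_mul (by positivity)]
          congr 2
          have : ((1/2 : ℝ) ^ k) ^ β * ((1/2 : ℝ) ^ k) ^ (d:ℝ) = q ^ k := by
            rw [← Real.rpow_add hrk, ← Real.rpow_natCast ((1/2 : ℝ)) k,
              ← Real.rpow_mul (by norm_num), mul_comm (k:ℝ), Real.rpow_mul (by norm_num),
              Real.rpow_natCast]
          rw [mul_assoc, ← this, Real.rpow_natCast]
  calc ∫⁻ w in {w : Fin d → ℝ | ‖w‖ ≤ 1}, ENNReal.ofReal (‖w‖ ^ β)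
      ≤ ∫⁻ w in {0} ∪ ⋃ k : ℕ, S k, ENNReal.ofReal (‖w‖ ^ β) := lintegral_mono_set cover
    _ ≤ (∫⁻ w in {(0 : Fin d → ℝ)}, ENNReal.ofReal (‖w‖ ^ β)) +
        ∫⁻ w in ⋃ k : ℕ, S k, ENNReal.ofReal (‖w‖ ^ β) := lintegral_union_le _ _ _
    _ ≤ 0 + ∑' k, ∫⁻ w in S k, ENNReal.ofReal (‖w‖ ^ β) := by
        gcongr
        · exact le_of_eq (setLIntegral_measure_zero _ _ (measure_singleton 0))
        · exact lintegral_iUnion_le _ _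
    _ ≤ 0 + ∑' k, ENNReal.ofReal (M * q ^ k) * V := by gcongr with k; exact key k
    _ < ⊤ := by
        rw [zero_add, ENNReal.tsum_mul_right,
          ← ENNReal.ofReal_tsum_of_nonneg (fun k => by positivity)
            ((summable_geometric_of_lt_one hq0 hq1).mul_left M)]
        exact ENNReal.mul_lt_top ENNReal.ofReal_lt_top measure_ball_lt_top

private lemma finite_outer (hd : 0 < d) (γ : ℝ) (hγ : (d:ℝ) < γ) :
    ∫⁻ w : Fin d → ℝ,
      Set.indicator {w : Fin d → ℝ | 1 < ‖w‖} (fun w => ENNReal.ofReal (‖w‖ ^ (-γ))) w < ⊤ := by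
  have hγ0 : 0 < γ := lt_of_le_of_lt (by positivity) hγ
  have hpt : ∀ w : Fin d → ℝ,
      Set.indicator {w : Fin d → ℝ | 1 < ‖w‖} (fun w => ENNReal.ofReal (‖w‖ ^ (-γ))) w
      ≤ ENNReal.ofReal ((2:ℝ) ^ γ) * ENNReal.ofReal ((1 + ‖w‖) ^ (-γ)) := by
    intro w
    by_cases hw : w ∈ {w : Fin d → ℝ | 1 < ‖w‖}
    · rw [Set.indicator_of_mem hw, ← ENNReal.ofReal_mul (by positivity)]
      apply ENNReal.ofReal_le_ofReal
      have hw1 : (1:ℝ) < ‖w‖ := hw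
      have h1 : (1 + ‖w‖) ≤ 2 * ‖w‖ := by linarith
      have h2 : (2 * ‖w‖) ^ (-γ) ≤ (1 + ‖w‖) ^ (-γ) :=
        Real.rpow_le_rpow_of_nonpos (by linarith) h1 (by linarith)
      have h3 : (2 * ‖w‖) ^ (-γ) = (2:ℝ) ^ (-γ) * ‖w‖ ^ (-γ) :=
        Real.mul_rpow (by norm_num) (by linarith)
      have h4 : (2:ℝ) ^ γ * (2:ℝ) ^ (-γ) = 1 := by
        rw [← Real.rpow_add (by norm_num)]; simp
      nlinarith [Real.rpow_nonneg (show (0:ℝ) ≤ 2 by norm_num) γ,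
        Real.rpow_nonneg (show (0:ℝ) ≤ ‖w‖ by positivity) (-γ)]
    · rw [Set.indicator_of_notMem hw]; exact zero_le
  calc ∫⁻ w : Fin d → ℝ,
        Set.indicator {w : Fin d → ℝ | 1 < ‖w‖} (fun w => ENNReal.ofReal (‖w‖ ^ (-γ))) w
      ≤ ∫⁻ w : Fin d → ℝ, ENNReal.ofReal ((2:ℝ) ^ γ) * ENNReal.ofReal ((1 + ‖w‖) ^ (-γ)) :=
        lintegral_mono hpt
    _ = ENNReal.ofReal ((2:ℝ) ^ γ) * ∫⁻ w : Fin d → ℝ, ENNReal.ofReal ((1 + ‖w‖) ^ (-γ)) :=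
        lintegral_const_mul' _ _ ENNReal.ofReal_ne_top
    _ < ⊤ := ENNReal.mul_lt_top ENNReal.ofReal_lt_top
        (finite_integral_one_add_norm (by rwa [Module.finrank_fin_fun]))
end helpers

set_option maxHeartbeats 2000000 in
/-- For `α ∈ (0,1)`, the measure
`ν(dz) = 1_{z ∈ ℝ_+^d, |z| ≤ 1} |z|^{−d−α} dz` is a Lévy measure on `ℝ_+^d` with
`∫ (1 ∧ |z|) dν < ∞`, and there are `c, C > 0` with
`c|λ|^α ≤ ∫ (1 − cos(λ·z)) dν ≤ C|λ|^α` for all `|λ| ≥ 1`. -/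
theorem stmt_18 (d : ℕ) (hd : 0 < d) (α : ℝ) (hα : α ∈ Set.Ioo (0 : ℝ) 1)
    (ν : Measure (Fin d → ℝ))
    (hν : ν = (volume : Measure (Fin d → ℝ)).withDensity fun z =>
      Set.indicator {z : Fin d → ℝ | (∀ i, 0 ≤ z i) ∧ ‖z‖ ≤ 1}
        (fun z => ENNReal.ofReal (‖z‖ ^ (-(d : ℝ) - α))) z) :
    ν {0} = 0 ∧ (∫⁻ z, ENNReal.ofReal (min 1 ‖z‖) ∂ν) < ⊤ ∧
    ∃ c > (0 : ℝ), ∃ C > (0 : ℝ), ∀ l : Fin d → ℝ, 1 ≤ ‖l‖ →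
      c * ‖l‖ ^ α ≤ ∫ z, (1 - Real.cos (∑ i, l i * z i)) ∂ν ∧
      (∫ z, (1 - Real.cos (∑ i, l i * z i)) ∂ν) ≤ C * ‖l‖ ^ α := by
  subst hν
  obtain ⟨hα0, hα1⟩ := hα
  have hnon : Nonempty (Fin d) := ⟨⟨0, hd⟩⟩
  have hd1 : (1:ℝ) ≤ d := by exact_mod_cast hd
  set K : Set (Fin d → ℝ) := {z : Fin d → ℝ | (∀ i, 0 ≤ z i) ∧ ‖z‖ ≤ 1} with hK
  set D : (Fin d → ℝ) → ℝ≥0∞ :=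
    fun z => Set.indicator K (fun z => ENNReal.ofReal (‖z‖ ^ (-(d : ℝ) - α))) z with hD
  have hKmeas : MeasurableSet K := by
    rw [hK, Set.setOf_and]
    refine MeasurableSet.inter ?_ (measurableSet_le measurable_norm measurable_const)
    rw [Set.setOf_forall]
    exact MeasurableSet.iInter fun i => measurableSet_le measurable_const (measurable_pi_apply i)
  have hDmeas : Measurable D := Measurable.indicator (by fun_prop) hKmeas
  have hexp_ne : -(d:ℝ) - α ≠ 0 := by linarith
  refine ⟨?_, ?_, ?_⟩
  · rw [withDensity_apply _ (measurableSet_singleton 0)]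
    exact setLIntegral_measure_zero _ _ (measure_singleton 0)
  · rw [lintegral_withDensity_eq_lintegral_mul volume hDmeas
      ((measurable_const.min measurable_norm).ennreal_ofReal)]
    refine lt_of_le_of_lt (lintegral_mono (fun z => ?_))
      (finite_small hd (-(d:ℝ) - α + 1) (by push_cast; linarith))
    simp only [Pi.mul_apply, hD]
    by_cases hzK : z ∈ K
    · rw [Set.indicator_of_mem hzK,
        Set.indicator_of_mem (show z ∈ {w : Fin d → ℝ | ‖w‖ ≤ 1} from hzK.2)]
      rw [← ENNReal.ofReal_mul (Real.rpow_nonneg (norm_nonneg z) _)]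
      apply ENNReal.ofReal_le_ofReal
      rcases eq_or_ne z 0 with rfl | hz0
      · have h2 : -(d:ℝ) - α + 1 ≠ 0 := by linarith
        simp [Real.zero_rpow hexp_ne, Real.zero_rpow h2]
      · have hzpos : 0 < ‖z‖ := norm_pos_iff.mpr hz0
        rw [min_eq_right hzK.2, Real.rpow_add_one hzpos.ne']
    · rw [Set.indicator_of_notMem hzK, zero_mul]; exact zero_le
  · -- Part 3
    set A : ℝ≥0∞ := ∫⁻ w : Fin d → ℝ, Set.indicator {w : Fin d → ℝ | ‖w‖ ≤ 1}
        (fun w => ENNReal.ofReal (‖w‖ ^ (-(d:ℝ) - α + 2))) w with hA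
    set B : ℝ≥0∞ := ∫⁻ w : Fin d → ℝ, Set.indicator {w : Fin d → ℝ | 1 < ‖w‖}
        (fun w => ENNReal.ofReal (‖w‖ ^ (-((d:ℝ) + α)))) w with hB
    have hAfin : A < ⊤ := finite_small hd _ (by push_cast; linarith)
    have hBfin : B < ⊤ := finite_outer hd _ (by push_cast; linarith)
    have hmeasA : Measurable (fun w : Fin d → ℝ => Set.indicator {w : Fin d → ℝ | ‖w‖ ≤ 1}
        (fun w => ENNReal.ofReal (‖w‖ ^ (-(d:ℝ) - α + 2))) w) :=
      Measurable.indicator (by fun_prop) (measurableSet_le measurable_norm measurable_const)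
    have hmeasB : Measurable (fun w : Fin d → ℝ => Set.indicator {w : Fin d → ℝ | 1 < ‖w‖}
        (fun w => ENNReal.ofReal (‖w‖ ^ (-((d:ℝ) + α)))) w) :=
      Measurable.indicator (by fun_prop) (measurableSet_lt measurable_const measurable_norm)
    set J : (Fin d → ℝ) → ℝ≥0∞ :=
      fun l => ∫⁻ z, D z * ENNReal.ofReal (1 - Real.cos (∑ i, l i * z i)) with hJ
    have hcos_nonneg : ∀ x : ℝ, (0:ℝ) ≤ 1 - Real.cos x := fun x => by
      linarith [Real.cos_le_one x]
    have hcont : ∀ l : Fin d → ℝ, Continuous fun z : Fin d → ℝ =>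
        1 - Real.cos (∑ i, l i * z i) := fun l =>
      continuous_const.sub (Real.continuous_cos.comp
        (continuous_finset_sum _ fun i _ => continuous_const.mul (continuous_apply i)))
    have hFrep : ∀ l : Fin d → ℝ,
        ∫ z, (1 - Real.cos (∑ i, l i * z i)) ∂(volume.withDensity D) = (J l).toReal := by
      intro l
      rw [integral_eq_lintegral_of_nonneg_ae (Filter.Eventually.of_forall fun z => hcos_nonneg _)
        (hcont l).aestronglyMeasurable,
        lintegral_withDensity_eq_lintegral_mul volume hDmeas
          ((hcont l).measurable.ennreal_ofReal)]
      rfl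
    -- upper bound
    have upper : ∀ l : Fin d → ℝ, 1 ≤ ‖l‖ →
        J l ≤ ENNReal.ofReal (((d:ℝ)^2/2 * A.toReal + 2 * B.toReal) * ‖l‖ ^ α) := by
      intro l hL1
      have hL0 : (0:ℝ) < ‖l‖ := lt_of_lt_of_le one_pos hL1
      set L := ‖l‖ with hLdef
      set h : (Fin d → ℝ) → ℝ≥0∞ := fun w =>
        ENNReal.ofReal ((d:ℝ)^2/2 * L ^ ((d:ℝ) + α)) * Set.indicator {w : Fin d → ℝ | ‖w‖ ≤ 1}
            (fun w => ENNReal.ofReal (‖w‖ ^ (-(d:ℝ) - α + 2))) w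
          + ENNReal.ofReal (2 * L ^ ((d:ℝ) + α)) * Set.indicator {w : Fin d → ℝ | 1 < ‖w‖}
            (fun w => ENNReal.ofReal (‖w‖ ^ (-((d:ℝ) + α)))) w with hh
      have hmeash : Measurable h :=
        ((measurable_const.mul hmeasA).add (measurable_const.mul hmeasB))
      have hLpow_ne : (L:ℝ)^(d:ℕ) ≠ 0 := pow_ne_zero _ hL0.ne'
      have hLrpow : L ^ ((d:ℝ) + α) = L^(d:ℕ) * L ^ α := by
        rw [Real.rpow_add hL0, Real.rpow_natCast]
      have hLrpow_nn : (0:ℝ) ≤ L ^ ((d:ℝ) + α) := Real.rpow_nonneg hL0.le _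
      have hpt : ∀ z, D z * ENNReal.ofReal (1 - Real.cos (∑ i, l i * z i)) ≤ h (L • z) := by
        intro z
        simp only [hD]
        by_cases hzK : z ∈ K
        · rw [Set.indicator_of_mem hzK]
          have habs_i : ∀ i, |l i * z i| ≤ L * ‖z‖ := fun i => by
            rw [abs_mul]
            exact mul_le_mul (Real.norm_eq_abs (l i) ▸ norm_le_pi_norm l i)
              (Real.norm_eq_abs (z i) ▸ norm_le_pi_norm z i) (abs_nonneg _) (norm_nonneg l)
          have htabs : |∑ i, l i * z i| ≤ d * (L * ‖z‖) := by
            calc |∑ i, l i * z i| ≤ ∑ i, |l i * z i| := Finset.abs_sum_le_sum_abs _ _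
              _ ≤ ∑ _i : Fin d, L * ‖z‖ := Finset.sum_le_sum fun i _ => habs_i i
              _ = d * (L * ‖z‖) := by
                  rw [Finset.sum_const, Finset.card_univ, Fintype.card_fin, nsmul_eq_mul]
          rcases le_or_gt (L * ‖z‖) 1 with hsm | hbg
          · have hmem : (L • z) ∈ {w : Fin d → ℝ | ‖w‖ ≤ 1} := by
              simp only [Set.mem_setOf_eq, norm_smul, Real.norm_eq_abs, abs_of_pos hL0]
              exact hsm
            have hnmem : (L • z) ∉ {w : Fin d → ℝ | 1 < ‖w‖} := by
              simp only [Set.mem_setOf_eq, norm_smul, Real.norm_eq_abs, abs_of_pos hL0, not_lt]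
              exact hsm
            simp only [hh, Set.indicator_of_mem hmem, Set.indicator_of_notMem hnmem,
              mul_zero, add_zero]
            rw [norm_smul, Real.norm_eq_abs, abs_of_pos hL0,
              ← ENNReal.ofReal_mul (Real.rpow_nonneg (norm_nonneg z) _),
              ← ENNReal.ofReal_mul
                (by positivity : (0:ℝ) ≤ (d:ℝ)^2/2 * L ^ ((d:ℝ) + α))]
            apply ENNReal.ofReal_le_ofReal
            rcases eq_or_ne z 0 with rfl | hz0
            · have : ‖(0 : Fin d → ℝ)‖ = 0 := norm_zero
              rw [this, Real.zero_rpow hexp_ne, zero_mul]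
              have h2 : (0:ℝ) ≤ (L * 0) ^ (-(d:ℝ) - α + 2) := Real.rpow_nonneg (by simp) _
              exact mul_nonneg (mul_nonneg (by positivity) hLrpow_nn) h2
            · have hzpos : 0 < ‖z‖ := norm_pos_iff.mpr hz0
              have hcos2 : 1 - Real.cos (∑ i, l i * z i) ≤ (∑ i, l i * z i)^2/2 := by
                linarith [Real.one_sub_sq_div_two_le_cos (x := ∑ i, l i * z i)]
              have htsq : (∑ i, l i * z i)^2 ≤ (d * (L * ‖z‖))^2 := by
                have h1 := abs_nonneg (∑ i, l i * z i)
                nlinarith [htabs, sq_abs (∑ i, l i * z i)]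
              have e1 : (L * ‖z‖) ^ (-(d:ℝ) - α + 2)
                  = L ^ (-(d:ℝ) - α + 2) * ‖z‖ ^ (-(d:ℝ) - α + 2) :=
                Real.mul_rpow hL0.le hzpos.le
              have e2 : ‖z‖ ^ (-(d:ℝ) - α + 2) = ‖z‖ ^ (-(d:ℝ) - α) * ‖z‖^(2:ℕ) := by
                rw [← Real.rpow_natCast ‖z‖ 2, ← Real.rpow_add hzpos]
                norm_num
              have e3 : L ^ ((d:ℝ) + α) * L ^ (-(d:ℝ) - α + 2) = L^(2:ℕ) := by
                rw [← Real.rpow_add hL0, ← Real.rpow_natCast L 2]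
                congr 1
                push_cast; ring
              have hnn : (0:ℝ) ≤ ‖z‖ ^ (-(d:ℝ) - α) := Real.rpow_nonneg hzpos.le _
              calc ‖z‖ ^ (-(d:ℝ) - α) * (1 - Real.cos (∑ i, l i * z i))
                  ≤ ‖z‖ ^ (-(d:ℝ) - α) * ((d * (L * ‖z‖))^2 / 2) := by
                    apply mul_le_mul_of_nonneg_left _ hnn
                    linarith
                _ = (d:ℝ)^2/2 * L ^ ((d:ℝ) + α) * (L * ‖z‖) ^ (-(d:ℝ) - α + 2) := by
                    rw [e1, e2]
                    linear_combination
                      (-((d:ℝ)^2 * (‖z‖ ^ (-(d:ℝ) - α)) * ‖z‖^(2:ℕ) / 2)) * e3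
          · have hmem : (L • z) ∈ {w : Fin d → ℝ | 1 < ‖w‖} := by
              simp only [Set.mem_setOf_eq, norm_smul, Real.norm_eq_abs, abs_of_pos hL0]
              exact hbg
            have hnmem : (L • z) ∉ {w : Fin d → ℝ | ‖w‖ ≤ 1} := by
              simp only [Set.mem_setOf_eq, norm_smul, Real.norm_eq_abs, abs_of_pos hL0, not_le]
              exact hbg
            simp only [hh, Set.indicator_of_mem hmem, Set.indicator_of_notMem hnmem,
              mul_zero, zero_add]
            rw [norm_smul, Real.norm_eq_abs, abs_of_pos hL0,
              ← ENNReal.ofReal_mul (Real.rpow_nonneg (norm_nonneg z) _),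
              ← ENNReal.ofReal_mul
                (by positivity : (0:ℝ) ≤ 2 * L ^ ((d:ℝ) + α))]
            apply ENNReal.ofReal_le_ofReal
            have hzpos : 0 < ‖z‖ := by nlinarith [norm_nonneg z]
            have e1 : (L * ‖z‖) ^ (-((d:ℝ) + α))
                = L ^ (-((d:ℝ) + α)) * ‖z‖ ^ (-((d:ℝ) + α)) := Real.mul_rpow hL0.le hzpos.le
            have e3 : L ^ ((d:ℝ) + α) * L ^ (-((d:ℝ) + α)) = 1 := by
              rw [← Real.rpow_add hL0, show (d:ℝ) + α + -((d:ℝ) + α) = 0 by ring,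
                Real.rpow_zero]
            have hcos2 : 1 - Real.cos (∑ i, l i * z i) ≤ 2 := by
              linarith [Real.neg_one_le_cos (∑ i, l i * z i)]
            have hee : ‖z‖ ^ (-(d:ℝ) - α) = ‖z‖ ^ (-((d:ℝ) + α)) := by
              congr 1; ring
            rw [hee, e1]
            have hrw : 2 * L ^ ((d:ℝ) + α) * (L ^ (-((d:ℝ) + α)) * ‖z‖ ^ (-((d:ℝ) + α)))
                = 2 * ‖z‖ ^ (-((d:ℝ) + α)) := by
              linear_combination (2 * ‖z‖ ^ (-((d:ℝ) + α))) * e3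
            rw [hrw]
            have hnn : (0:ℝ) ≤ ‖z‖ ^ (-((d:ℝ) + α)) := Real.rpow_nonneg hzpos.le _
            nlinarith
        · rw [Set.indicator_of_notMem hzK, zero_mul]; exact zero_le
      have step3 : ∫⁻ w, h w = ENNReal.ofReal ((d:ℝ)^2/2 * L ^ ((d:ℝ) + α)) * A
          + ENNReal.ofReal (2 * L ^ ((d:ℝ) + α)) * B := by
        simp only [hh]
        rw [lintegral_add_left (hmeasA.const_mul _),
          lintegral_const_mul' _ _ ENNReal.ofReal_ne_top,
          lintegral_const_mul' _ _ ENNReal.ofReal_ne_top, ← hA, ← hB]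
      calc J l ≤ ∫⁻ z, h (L • z) := lintegral_mono hpt
        _ = ENNReal.ofReal ((L^(d:ℕ))⁻¹) * ∫⁻ w, h w := lint_smul hmeash hL0
        _ = ENNReal.ofReal ((L^(d:ℕ))⁻¹) * (ENNReal.ofReal ((d:ℝ)^2/2 * L ^ ((d:ℝ) + α)) * A
            + ENNReal.ofReal (2 * L ^ ((d:ℝ) + α)) * B) := by rw [step3]
        _ = ENNReal.ofReal ((L^(d:ℕ))⁻¹ * ((d:ℝ)^2/2 * L ^ ((d:ℝ) + α) * A.toReal
            + 2 * L ^ ((d:ℝ) + α) * B.toReal)) := by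
            rw [← ENNReal.ofReal_toReal hAfin.ne, ← ENNReal.ofReal_toReal hBfin.ne,
              ← ENNReal.ofReal_mul (by positivity),
              ← ENNReal.ofReal_mul (by positivity),
              ← ENNReal.ofReal_add
                (mul_nonneg (by positivity) ENNReal.toReal_nonneg)
                (mul_nonneg (by positivity) ENNReal.toReal_nonneg),
              ← ENNReal.ofReal_mul (by positivity),
              ENNReal.toReal_ofReal ENNReal.toReal_nonneg,
              ENNReal.toReal_ofReal ENNReal.toReal_nonneg]
        _ ≤ ENNReal.ofReal (((d:ℝ)^2/2 * A.toReal + 2 * B.toReal) * L ^ α) := by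
            apply ENNReal.ofReal_le_ofReal
            apply le_of_eq
            rw [hLrpow]
            field_simp
    -- lower bound
    have hc0 : Real.cos (1/4) < 1 := by
      have h := Real.cos_lt_cos_of_nonneg_of_le_pi (le_refl (0:ℝ))
        (by linarith [Real.pi_gt_three] : (1:ℝ)/4 ≤ Real.pi) (by norm_num : (0:ℝ) < 1/4)
      simpa using h
    have hc0' : (0:ℝ) < 1 - Real.cos (1/4) := by linarith
    have lower : ∀ l : Fin d → ℝ, 1 ≤ ‖l‖ →
        ENNReal.ofReal ((1 - Real.cos (1/4)) * (1/(4*(d:ℝ)))^d * ‖l‖ ^ α) ≤ J l := by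
      intro l hL1
      have hL0 : (0:ℝ) < ‖l‖ := lt_of_lt_of_le one_pos hL1
      set L := ‖l‖ with hLdef
      obtain ⟨i, -, hi⟩ := Finset.exists_max_image (Finset.univ : Finset (Fin d))
        (fun j => |l j|) ⟨⟨0, hd⟩, Finset.mem_univ _⟩
      have hiL : |l i| = L := by
        refine le_antisymm (Real.norm_eq_abs (l i) ▸ norm_le_pi_norm l i) ?_
        refine (pi_norm_le_iff_of_nonneg (abs_nonneg _)).mpr fun j => ?_
        rw [Real.norm_eq_abs]; exact hi j (Finset.mem_univ j)
      set ε : ℝ := 1/(4*(d:ℝ)) with hε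
      have hdpos : (0:ℝ) < d := by exact_mod_cast hd
      have hε0 : 0 < ε := by rw [hε]; positivity
      have hεhalf : ε ≤ 1/2 := by
        rw [hε, div_le_div_iff₀ (by positivity) (by norm_num : (0:ℝ) < 2)]
        nlinarith
      set S : Set (Fin d → ℝ) := Set.univ.pi fun j =>
        if j = i then Set.Ioo (1/(2*L)) (1/L) else Set.Ioo 0 (ε/L) with hSdef
      have hSmeas : MeasurableSet S := MeasurableSet.univ_pi fun j => by
        split <;> exact measurableSet_Ioo
      have hptS : ∀ z ∈ S, ENNReal.ofReal (L ^ ((d:ℝ) + α) * (1 - Real.cos (1/4)))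
          ≤ D z * ENNReal.ofReal (1 - Real.cos (∑ j, l j * z j)) := by
        intro z hz
        have hzi : z i ∈ Set.Ioo (1/(2*L)) (1/L) := by
          have := (Set.mem_univ_pi.mp hz) i; rwa [if_pos rfl] at this
        have hzj : ∀ j, j ≠ i → z j ∈ Set.Ioo 0 (ε/L) := fun j hj => by
          have := (Set.mem_univ_pi.mp hz) j; rwa [if_neg hj] at this
        have hznn : ∀ j, 0 ≤ z j := fun j => by
          by_cases hj : j = i
          · subst hj; exact le_of_lt (lt_trans (by positivity) hzi.1)
          · exact (hzj j hj).1.le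
        have hzle : ∀ j, z j ≤ 1/L := fun j => by
          by_cases hj : j = i
          · subst hj; exact hzi.2.le
          · refine le_trans (hzj j hj).2.le ?_
            gcongr
            linarith
        have hznorm : ‖z‖ ≤ 1/L := (pi_norm_le_iff_of_nonneg (by positivity)).mpr fun j => by
          rw [Real.norm_eq_abs, abs_of_nonneg (hznn j)]; exact hzle j
        have hzK : z ∈ K := ⟨hznn, le_trans hznorm ((div_le_one hL0).mpr hL1)⟩
        have hzinorm : z i ≤ ‖z‖ :=
          le_trans (le_abs_self _) (Real.norm_eq_abs (z i) ▸ norm_le_pi_norm z i)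
        have hznorm0 : 0 < ‖z‖ :=
          lt_of_lt_of_le (lt_trans (by positivity : (0:ℝ) < 1/(2*L)) hzi.1) hzinorm
        have hrest : |∑ j ∈ Finset.univ.erase i, l j * z j| ≤ 1/4 := by
          have hbound : ∀ j ∈ Finset.univ.erase i, |l j * z j| ≤ L * (ε/L) := by
            intro j hj
            obtain ⟨hji, -⟩ := Finset.mem_erase.mp hj
            rw [abs_mul]
            refine mul_le_mul (Real.norm_eq_abs (l j) ▸ norm_le_pi_norm l j) ?_
              (abs_nonneg _) (norm_nonneg l)
            rw [abs_of_nonneg (hznn j)]; exact (hzj j hji).2.le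
          have hcard : ((Finset.univ.erase i).card : ℝ) ≤ d := by
            exact_mod_cast le_trans (Finset.card_le_card (Finset.erase_subset _ _)) (by simp)
          have hLε : (0:ℝ) ≤ L * (ε/L) := by positivity
          calc |∑ j ∈ Finset.univ.erase i, l j * z j|
              ≤ ∑ j ∈ Finset.univ.erase i, |l j * z j| := Finset.abs_sum_le_sum_abs _ _
            _ ≤ ∑ _j ∈ Finset.univ.erase i, (L * (ε/L)) := Finset.sum_le_sum hbound
            _ = ((Finset.univ.erase i).card : ℝ) * (L * (ε/L)) := by
                rw [Finset.sum_const, nsmul_eq_mul]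
            _ ≤ (d:ℝ) * (L * (ε/L)) := by nlinarith
            _ = 1/4 := by rw [hε]; field_simp
        have hmain1 : 1/2 ≤ |l i| * z i := by
          rw [hiL]
          calc (1:ℝ)/2 = L * (1/(2*L)) := by field_simp
            _ ≤ L * z i := mul_le_mul_of_nonneg_left hzi.1.le hL0.le
        have hmain2 : |l i| * z i ≤ 1 := by
          rw [hiL]
          calc L * z i ≤ L * (1/L) := mul_le_mul_of_nonneg_left hzi.2.le hL0.le
            _ = 1 := by field_simp
        have habsmul : |l i * z i| = |l i| * z i := by
          rw [abs_mul, abs_of_nonneg (hznn i)]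
        have hsum : (∑ j, l j * z j) = l i * z i + ∑ j ∈ Finset.univ.erase i, l j * z j :=
          (Finset.add_sum_erase _ _ (Finset.mem_univ i)).symm
        have habs_lo : 1/4 ≤ |∑ j, l j * z j| := by
          rw [hsum]
          have h1 := abs_add_le (l i * z i + ∑ j ∈ Finset.univ.erase i, l j * z j)
            (-(∑ j ∈ Finset.univ.erase i, l j * z j))
          rw [add_neg_cancel_right, abs_neg] at h1
          rw [← habsmul] at hmain1
          linarith
        have habs_hi : |∑ j, l j * z j| ≤ 5/4 := by
          rw [hsum]
          refine le_trans (abs_add_le _ _) ?_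
          rw [habsmul]
          linarith
        have hcos : 1 - Real.cos (1/4) ≤ 1 - Real.cos (∑ j, l j * z j) := by
          have h1 : Real.cos (∑ j, l j * z j) = Real.cos |∑ j, l j * z j| :=
            (Real.cos_abs _).symm
          have h2 : Real.cos |∑ j, l j * z j| ≤ Real.cos (1/4) :=
            Real.cos_le_cos_of_nonneg_of_le_pi (by norm_num)
              (le_trans habs_hi (by linarith [Real.pi_gt_three])) habs_lo
          linarith
        simp only [hD]
        rw [Set.indicator_of_mem hzK,
          ENNReal.ofReal_mul (Real.rpow_nonneg hL0.le _)]
        refine mul_le_mul' (ENNReal.ofReal_le_ofReal ?_) (ENNReal.ofReal_le_ofReal hcos)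
        have h1 : (1/L : ℝ) ^ (-(d:ℝ) - α) ≤ ‖z‖ ^ (-(d:ℝ) - α) :=
          Real.rpow_le_rpow_of_nonpos hznorm0 hznorm (by linarith)
        have h2 : (1/L : ℝ) ^ (-(d:ℝ) - α) = L ^ ((d:ℝ) + α) := by
          rw [one_div, Real.inv_rpow hL0.le, ← Real.rpow_neg hL0.le]
          congr 1; ring
        linarith [h2 ▸ h1]
      have hvol : ENNReal.ofReal ((ε/L)^d) ≤ volume S := by
        rw [hSdef, volume_pi_pi]
        calc ENNReal.ofReal ((ε/L)^d) = ∏ _j : Fin d, ENNReal.ofReal (ε/L) := by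
              rw [Finset.prod_const, Finset.card_univ, Fintype.card_fin,
                ← ENNReal.ofReal_pow (by positivity)]
          _ ≤ ∏ j : Fin d, volume (if j = i then Set.Ioo (1/(2*L)) (1/L) else Set.Ioo 0 (ε/L)) := by
              refine Finset.prod_le_prod' fun j _ => ?_
              split
              · rw [Real.volume_Ioo]
                apply ENNReal.ofReal_le_ofReal
                rw [show (1:ℝ)/L - 1/(2*L) = (1/2)/L by field_simp; ring]
                gcongr
              · rw [Real.volume_Ioo, sub_zero]
      have hfinal : ENNReal.ofReal ((1 - Real.cos (1/4)) * (1/(4*(d:ℝ)))^d * L ^ α)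
          ≤ ENNReal.ofReal (L ^ ((d:ℝ) + α) * (1 - Real.cos (1/4))) * ENNReal.ofReal ((ε/L)^d) := by
        rw [← ENNReal.ofReal_mul (mul_nonneg (Real.rpow_nonneg hL0.le _) hc0'.le)]
        apply ENNReal.ofReal_le_ofReal
        apply le_of_eq
        have hLrpow : L ^ ((d:ℝ) + α) = L^(d:ℕ) * L ^ α := by
          rw [Real.rpow_add hL0, Real.rpow_natCast]
        have hLpow_ne : (L:ℝ)^(d:ℕ) ≠ 0 := pow_ne_zero _ hL0.ne'
        rw [hLrpow, hε, div_pow, div_pow]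
        field_simp
        ring_nf
        simp [← mul_pow, hdpos.ne']
      calc ENNReal.ofReal ((1 - Real.cos (1/4)) * (1/(4*(d:ℝ)))^d * L ^ α)
          ≤ ENNReal.ofReal (L ^ ((d:ℝ) + α) * (1 - Real.cos (1/4)))
            * ENNReal.ofReal ((ε/L)^d) := hfinal
        _ ≤ ENNReal.ofReal (L ^ ((d:ℝ) + α) * (1 - Real.cos (1/4))) * volume S :=
            mul_le_mul_right hvol _
        _ = ∫⁻ _z in S, ENNReal.ofReal (L ^ ((d:ℝ) + α) * (1 - Real.cos (1/4))) :=
            (setLIntegral_const _ _).symm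
        _ ≤ ∫⁻ z in S, D z * ENNReal.ofReal (1 - Real.cos (∑ j, l j * z j)) :=
            setLIntegral_mono' hSmeas hptS
        _ ≤ J l := setLIntegral_le_lintegral _ _
    refine ⟨(1 - Real.cos (1/4)) * (1/(4*(d:ℝ)))^d, by positivity,
      ((d:ℝ)^2/2 * A.toReal + 2 * B.toReal) + 1, ?_, fun l hL1 => ?_⟩
    · have h1 : (0:ℝ) ≤ (d:ℝ)^2/2 * A.toReal := mul_nonneg (by positivity) ENNReal.toReal_nonneg
      have h2 : (0:ℝ) ≤ 2 * B.toReal := mul_nonneg (by norm_num) ENNReal.toReal_nonneg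
      linarith
    · have hJle := upper l hL1
      have hJne : J l ≠ ⊤ := ne_top_of_le_ne_top ENNReal.ofReal_ne_top hJle
      rw [hFrep l]
      have hXnn : (0:ℝ) ≤ (d:ℝ)^2/2 * A.toReal + 2 * B.toReal := by
        have h1 : (0:ℝ) ≤ (d:ℝ)^2/2 * A.toReal := mul_nonneg (by positivity) ENNReal.toReal_nonneg
        have h2 : (0:ℝ) ≤ 2 * B.toReal := mul_nonneg (by norm_num) ENNReal.toReal_nonneg
        linarith
      constructor
      · rw [← ENNReal.toReal_ofReal
          (show (0:ℝ) ≤ (1 - Real.cos (1/4)) * (1/(4*(d:ℝ)))^d * ‖l‖ ^ α by positivity)]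
        exact ENNReal.toReal_mono hJne (lower l hL1)
      · refine le_trans (ENNReal.toReal_mono ENNReal.ofReal_ne_top hJle) ?_
        rw [ENNReal.toReal_ofReal (mul_nonneg hXnn (by positivity))]
        have hl : (0:ℝ) ≤ ‖l‖ ^ α := by positivity
        nlinarith
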